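/- Let U be a hollow and uniform right R-module, put M = U², U₁ = U × 0 and U₂ = 0 × U. Suppose that for any right R-module X, any homomorphism f : U₁ → X and any surjective homomorphism g : U₂ → X, one of the following holds: (i) there exists a homomorphism h : U₁ → U₂ such that f = g ∘ h; (ii) there exist a submodule N of U₂ and a surjective homomorphism h : N → U₁ such that g restricted to N equals f ∘ h. Then M is lifting. -/
import Mathlib


/-- A submodule `N` of `M` is *small* (superfluous) in `M` if `N + X ≠ M`
for every proper submodule `X` of `M`. -/
def IsSmallSubmodule {R M : Type*} [Ring R] [AddCommGroup M] [Module R M]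
    (N : Submodule R M) : Prop :=
  ∀ X : Submodule R M, X ≠ ⊤ → N ⊔ X ≠ ⊤

/-- A nonzero module `M` is *hollow* if every proper submodule of `M` is small in `M`. -/
def IsHollowModule (R M : Type*) [Ring R] [AddCommGroup M] [Module R M] : Prop :=
  Nontrivial M ∧ ∀ N : Submodule R M, N ≠ ⊤ → IsSmallSubmodule N

/-- A submodule `N` of `M` is *essential* in `M` if `N ∩ X ≠ 0`
for every nonzero submodule `X` of `M`. -/
def IsEssentialSubmodule {R M : Type*} [Ring R] [AddCommGroup M] [Module R M]
    (N : Submodule R M) : Prop :=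
  ∀ X : Submodule R M, X ≠ ⊥ → N ⊓ X ≠ ⊥

/-- A nonzero module `M` is *uniform* if every nonzero submodule of `M` is essential in `M`. -/
def IsUniformModule (R M : Type*) [Ring R] [AddCommGroup M] [Module R M] : Prop :=
  Nontrivial M ∧ ∀ N : Submodule R M, N ≠ ⊥ → IsEssentialSubmodule N

/-- `X` is a direct summand of `M`. -/
def IsDirectSummand {R M : Type*} [Ring R] [AddCommGroup M] [Module R M]
    (X : Submodule R M) : Prop :=
  ∃ Y : Submodule R M, IsCompl X Y

/-- A module `M` is *lifting* if for every submodule `N` of `M` there is a direct summand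
`X` of `M` with `X ⊆ N` such that `N/X` is small in `M/X`. -/
def IsLiftingModule (R M : Type*) [Ring R] [AddCommGroup M] [Module R M] : Prop :=
  ∀ N : Submodule R M, ∃ X : Submodule R M,
    X ≤ N ∧ IsDirectSummand X ∧ IsSmallSubmodule (N.map X.mkQ)

/-- A module `M` is *extending* if for every submodule `N` of `M` there is a direct summand
`X` of `M` such that `N` is essential in `X`. -/
def IsExtendingModule (R M : Type*) [Ring R] [AddCommGroup M] [Module R M] : Prop :=
  ∀ N : Submodule R M, ∃ X : Submodule R M,
    IsDirectSummand X ∧ N ≤ X ∧ ∀ Y : Submodule R M, Y ≤ X → Y ≠ ⊥ → N ⊓ Y ≠ ⊥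

/-- A module is *uniserial* if its submodules are linearly ordered by inclusion. -/
def IsUniserialModule (R M : Type*) [Ring R] [AddCommGroup M] [Module R M] : Prop :=
  ∀ A B : Submodule R M, A ≤ B ∨ B ≤ A

/-- An internal finite direct sum decomposition `M = ⨁ᵢ Fᵢ`. -/
def IsInternalDirectSum {R M ι : Type*} [Ring R] [AddCommGroup M] [Module R M]
    (F : ι → Submodule R M) : Prop :=
  (⨆ i, F i) = ⊤ ∧ ∀ i, Disjoint (F i) (⨆ j ∈ ({i}ᶜ : Set ι), F j)

/-- A module `M` satisfies the *finite internal exchange property* if for any direct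
summand `X` of `M` and any finite direct sum decomposition `M = M₁ ⊕ ⋯ ⊕ Mₙ` there are
submodules `Mᵢ' ⊆ Mᵢ` with `M = X ⊕ M₁' ⊕ ⋯ ⊕ Mₙ'`. -/
def SatisfiesFIEP (R M : Type*) [Ring R] [AddCommGroup M] [Module R M] : Prop :=
  ∀ (X : Submodule R M), IsDirectSummand X →
    ∀ (n : ℕ) (Mi : Fin n → Submodule R M), IsInternalDirectSum Mi →
      ∃ Mi' : Fin n → Submodule R M, (∀ i, Mi' i ≤ Mi i) ∧
        IsInternalDirectSum (fun o : Option (Fin n) => o.elim X Mi')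

universe u

section LiftingAux

variable {R : Type*} {U : Type u} [Ring R] [AddCommGroup U] [Module R U]

private lemma mem_fst_iff {x : U × U} : x ∈ Submodule.fst R U U ↔ x.2 = 0 := by
  simp [Submodule.fst]

private lemma mem_snd_iff {x : U × U} : x ∈ Submodule.snd R U U ↔ x.1 = 0 := by
  simp [Submodule.snd]

private lemma small_prod_left (hH : IsHollowModule R U) {P : Submodule R U} (hP : P ≠ ⊤) :
    IsSmallSubmodule (P.prod (⊥ : Submodule R U)) := by
  intro X hX htop
  set W : Submodule R U := X.comap (LinearMap.inl R U U) with hWdef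
  have hPW : P ⊔ W = ⊤ := by
    rw [eq_top_iff]
    rintro a -
    have ha : ((a, 0) : U × U) ∈ P.prod (⊥ : Submodule R U) ⊔ X := by rw [htop]; trivial
    rcases Submodule.mem_sup.mp ha with ⟨y, hy, z, hz, hyz⟩
    rcases (Submodule.mem_prod.mp hy) with ⟨hy1, hy2⟩
    simp only [Submodule.mem_bot] at hy2
    have hz1 : z = LinearMap.inl R U U (a - y.1) := by
      have hzv : z = ((a, 0) : U × U) - y := by rw [← hyz]; abel
      rw [hzv]
      ext <;> simp [hy2]
    have haw : a - y.1 ∈ W := by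
      rw [hWdef]
      exact Submodule.mem_comap.mpr (by rw [← hz1]; exact hz)
    exact Submodule.mem_sup.mpr ⟨y.1, hy1, a - y.1, haw, by abel⟩
  by_cases hW : W = ⊤
  · apply hX
    have hfst : ∀ a : U, ((a, 0) : U × U) ∈ X := by
      intro a
      have : a ∈ W := hW ▸ Submodule.mem_top
      exact Submodule.mem_comap.mp this
    have hsnd : ∀ b : U, ((0, b) : U × U) ∈ X := by
      intro b
      have hb : ((0, b) : U × U) ∈ P.prod (⊥ : Submodule R U) ⊔ X := by rw [htop]; trivial
      rcases Submodule.mem_sup.mp hb with ⟨y, hy, z, hz, hyz⟩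
      rcases (Submodule.mem_prod.mp hy) with ⟨hy1, hy2⟩
      simp only [Submodule.mem_bot] at hy2
      have : ((0, b) : U × U) = (y.1, 0) + z := by
        rw [← hyz]; ext <;> simp [hy2]
      rw [this]
      exact X.add_mem (hfst y.1) hz
    rw [eq_top_iff]
    rintro ⟨a, b⟩ -
    have : ((a, b) : U × U) = (a, 0) + (0, b) := by ext <;> simp
    rw [this]
    exact X.add_mem (hfst a) (hsnd b)
  · exact hH.2 P hP W hW hPW

private lemma small_prod_right (hH : IsHollowModule R U) {Q : Submodule R U} (hQ : Q ≠ ⊤) :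
    IsSmallSubmodule ((⊥ : Submodule R U).prod Q) := by
  intro X hX htop
  set W : Submodule R U := X.comap (LinearMap.inr R U U) with hWdef
  have hPW : Q ⊔ W = ⊤ := by
    rw [eq_top_iff]
    rintro b -
    have hb : ((0, b) : U × U) ∈ (⊥ : Submodule R U).prod Q ⊔ X := by rw [htop]; trivial
    rcases Submodule.mem_sup.mp hb with ⟨y, hy, z, hz, hyz⟩
    rcases (Submodule.mem_prod.mp hy) with ⟨hy1, hy2⟩
    simp only [Submodule.mem_bot] at hy1
    have hz1 : z = LinearMap.inr R U U (b - y.2) := by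
      have hzv : z = ((0, b) : U × U) - y := by rw [← hyz]; abel
      rw [hzv]
      ext <;> simp [hy1]
    have haw : b - y.2 ∈ W := by
      rw [hWdef]
      exact Submodule.mem_comap.mpr (by rw [← hz1]; exact hz)
    exact Submodule.mem_sup.mpr ⟨y.2, hy2, b - y.2, haw, by abel⟩
  by_cases hW : W = ⊤
  · apply hX
    have hsnd : ∀ b : U, ((0, b) : U × U) ∈ X := by
      intro b
      have : b ∈ W := hW ▸ Submodule.mem_top
      exact Submodule.mem_comap.mp this
    have hfst : ∀ a : U, ((a, 0) : U × U) ∈ X := by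
      intro a
      have hb : ((a, 0) : U × U) ∈ (⊥ : Submodule R U).prod Q ⊔ X := by rw [htop]; trivial
      rcases Submodule.mem_sup.mp hb with ⟨y, hy, z, hz, hyz⟩
      rcases (Submodule.mem_prod.mp hy) with ⟨hy1, hy2⟩
      simp only [Submodule.mem_bot] at hy1
      have : ((a, 0) : U × U) = (0, y.2) + z := by
        rw [← hyz]; ext <;> simp [hy1]
      rw [this]
      exact X.add_mem (hsnd y.2) hz
    rw [eq_top_iff]
    rintro ⟨a, b⟩ -
    have : ((a, b) : U × U) = (a, 0) + (0, b) := by ext <;> simp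
    rw [this]
    exact X.add_mem (hfst a) (hsnd b)
  · exact hH.2 Q hQ W hW hPW


end LiftingAux

section LiftingAux2

variable {R : Type*} [Ring R]

private lemma isSmall_quot {M : Type*} [AddCommGroup M] [Module R M] {X N : Submodule R M}
    (hXN : X ≤ N) (h : ∀ Y : Submodule R M, X ≤ Y → Y ≠ ⊤ → N ⊔ Y ≠ ⊤) :
    IsSmallSubmodule (N.map X.mkQ) := by
  intro Y' hY' htop
  have hXle : X ≤ Y'.comap X.mkQ := by
    intro x hx
    have : X.mkQ x = 0 := by
      rw [Submodule.mkQ_apply, Submodule.Quotient.mk_eq_zero]; exact hx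
    simp only [Submodule.mem_comap, this]
    exact Y'.zero_mem
  have hne : Y'.comap X.mkQ ≠ ⊤ := by
    intro hc
    apply hY'
    have := Submodule.map_comap_eq_of_surjective X.mkQ_surjective Y'
    rw [hc, Submodule.map_top, Submodule.range_mkQ] at this
    exact this.symm
  have hsup : N ⊔ Y'.comap X.mkQ = ⊤ := by
    rw [eq_top_iff]
    rintro m -
    have hm : X.mkQ m ∈ N.map X.mkQ ⊔ Y' := by rw [htop]; trivial
    rcases Submodule.mem_sup.mp hm with ⟨a, ha, b, hb, hab⟩
    rcases Submodule.mem_map.mp ha with ⟨n, hn, rfl⟩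
    obtain ⟨y, hy⟩ := X.mkQ_surjective b
    have hyY : y ∈ Y'.comap X.mkQ := by simp only [Submodule.mem_comap, hy]; exact hb
    have hrest : m - n - y ∈ X := by
      have : X.mkQ (m - n - y) = 0 := by
        rw [map_sub, map_sub, hy]
        rw [← hab]
        abel
      rwa [Submodule.mkQ_apply, Submodule.Quotient.mk_eq_zero] at this
    refine Submodule.mem_sup.mpr ⟨n, hn, y + (m - n - y), ?_, by abel⟩
    exact Submodule.add_mem _ hyY (hXle hrest)
  exact h _ hXle hne hsup

private lemma isSmall_map_equiv {M₁ M₂ : Type*} [AddCommGroup M₁] [Module R M₁]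
    [AddCommGroup M₂] [Module R M₂] (e : M₁ ≃ₗ[R] M₂) {A : Submodule R M₁}
    (hA : IsSmallSubmodule A) :
    IsSmallSubmodule (A.map (e : M₁ →ₗ[R] M₂)) := by
  intro Y hY htop
  have hc : Y.comap (e : M₁ →ₗ[R] M₂) ≠ ⊤ := by
    intro hc
    apply hY
    rw [eq_top_iff]
    rintro y -
    have : e.symm y ∈ Y.comap (e : M₁ →ₗ[R] M₂) := by rw [hc]; trivial
    simpa using this
  apply hA _ hc
  rw [eq_top_iff]
  rintro m -
  have hm : e m ∈ A.map (e : M₁ →ₗ[R] M₂) ⊔ Y := by rw [htop]; trivial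
  rcases Submodule.mem_sup.mp hm with ⟨a', ha', z, hz, hsum⟩
  rcases Submodule.mem_map.mp ha' with ⟨a, ha, rfl⟩
  have hzc : m - a ∈ Y.comap (e : M₁ →ₗ[R] M₂) := by
    simp only [Submodule.mem_comap]
    have : (e : M₁ →ₗ[R] M₂) (m - a) = z := by
      have h2 : (e : M₁ →ₗ[R] M₂) a + z = (e : M₁ →ₗ[R] M₂) m := hsum
      rw [map_sub, ← h2]; abel
    rw [this]; exact hz
  exact Submodule.mem_sup.mpr ⟨a, ha, m - a, hzc, by abel⟩

private lemma transport {M : Type*} [AddCommGroup M] [Module R M]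
    (e : M ≃ₗ[R] M) {N : Submodule R M}
    (Hex : ∃ X : Submodule R M, X ≤ N.comap (e : M →ₗ[R] M) ∧ IsDirectSummand X ∧
      IsSmallSubmodule ((N.comap (e : M →ₗ[R] M)).map X.mkQ)) :
    ∃ X : Submodule R M, X ≤ N ∧ IsDirectSummand X ∧ IsSmallSubmodule (N.map X.mkQ) := by
  obtain ⟨X, hle, ⟨Y, hc⟩, hsm⟩ := Hex
  have hmapN : (N.comap (e : M →ₗ[R] M)).map (e : M →ₗ[R] M) = N :=
    Submodule.map_comap_eq_of_surjective e.surjective N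
  refine ⟨X.map (e : M →ₗ[R] M), ?_, ⟨Y.map (e : M →ₗ[R] M), ?_, ?_⟩, ?_⟩
  · exact le_trans (Submodule.map_mono hle) (le_of_eq hmapN)
  · rw [Submodule.disjoint_def]
    rintro x hx1 hx2
    rcases Submodule.mem_map.mp hx1 with ⟨xa, hxa, rfl⟩
    rcases Submodule.mem_map.mp hx2 with ⟨xb, hxb, hxe⟩
    have hab : xb = xa := e.injective hxe
    have : xa = 0 := (Submodule.disjoint_def.mp hc.disjoint) xa hxa (hab ▸ hxb)
    rw [this, map_zero]
  · rw [codisjoint_iff, eq_top_iff]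
    rintro m -
    have : e.symm m ∈ X ⊔ Y := by rw [hc.sup_eq_top]; trivial
    rcases Submodule.mem_sup.mp this with ⟨x, hx, y, hy, hsum⟩
    refine Submodule.mem_sup.mpr ⟨e x, Submodule.mem_map_of_mem hx, e y,
      Submodule.mem_map_of_mem hy, ?_⟩
    have := congrArg e hsum
    rw [map_add, e.apply_symm_apply] at this
    exact this
  · have key : N.map (X.map (e : M →ₗ[R] M)).mkQ =
        ((N.comap (e : M →ₗ[R] M)).map X.mkQ).map
          (Submodule.Quotient.equiv X (X.map (e : M →ₗ[R] M)) e rfl :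
            (M ⧸ X) →ₗ[R] (M ⧸ X.map (e : M →ₗ[R] M))) := by
      ext z
      constructor
      · rintro ⟨n, hn, rfl⟩
        refine ⟨X.mkQ (e.symm n), ⟨e.symm n, ?_, rfl⟩, ?_⟩
        · show (e : M →ₗ[R] M) (e.symm n) ∈ N
          simpa using hn
        · show (Submodule.Quotient.equiv X (X.map (e : M →ₗ[R] M)) e rfl) (X.mkQ (e.symm n)) =
            (X.map (e : M →ₗ[R] M)).mkQ n
          simp [Submodule.Quotient.equiv, Submodule.mkQ_apply, Submodule.mapQ_apply]
      · rintro ⟨w, ⟨m, hm, rfl⟩, rfl⟩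
        refine ⟨e m, hm, ?_⟩
        show (X.map (e : M →ₗ[R] M)).mkQ (e m) =
          (Submodule.Quotient.equiv X (X.map (e : M →ₗ[R] M)) e rfl) (X.mkQ m)
        simp [Submodule.Quotient.equiv, Submodule.mkQ_apply, Submodule.mapQ_apply]
    rw [key]
    exact isSmall_map_equiv _ hsm


end LiftingAux2

section LiftingAux3

variable {R : Type*} {U : Type u} [Ring R] [AddCommGroup U] [Module R U]

private lemma clean_case (hH : IsHollowModule R U)
    (hyp : ∀ (X : Type u) [AddCommGroup X] [Module R X]
      (f : ↥(Submodule.fst R U U) →ₗ[R] X) (g : ↥(Submodule.snd R U U) →ₗ[R] X),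
      Function.Surjective g →
        (∃ h : ↥(Submodule.fst R U U) →ₗ[R] ↥(Submodule.snd R U U), f = g ∘ₗ h) ∨
        (∃ (N : Submodule R ↥(Submodule.snd R U U))
            (h : ↥N →ₗ[R] ↥(Submodule.fst R U U)),
          Function.Surjective h ∧ g ∘ₗ N.subtype = f ∘ₗ h))
    (N : Submodule R (U × U)) (hN : N ≠ ⊤)
    (h1 : N ⊔ Submodule.fst R U U = ⊤) (h2 : N ⊔ Submodule.snd R U U = ⊤) :
    ∃ X : Submodule R (U × U), X ≤ N ∧ IsDirectSummand X ∧ IsSmallSubmodule (N.map X.mkQ) := by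
  classical
  set F := Submodule.fst R U U with hFdef
  set S := Submodule.snd R U U with hSdef
  -- fullness of projections
  have hPfull : ∀ a : U, ∃ t : U, ((a, t) : U × U) ∈ N := by
    intro a
    have ha : ((a, 0) : U × U) ∈ N ⊔ S := by rw [h2]; trivial
    rcases Submodule.mem_sup.mp ha with ⟨n, hn, z, hz, hsum⟩
    have hz1 : z.1 = 0 := mem_snd_iff.mp hz
    refine ⟨n.2, ?_⟩
    have hn1 : n.1 = a := by
      have := congrArg Prod.fst hsum
      simpa [hz1] using this
    have : ((a, n.2) : U × U) = n := by
      ext <;> simp [hn1]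
    rw [this]; exact hn
  have hQfull : ∀ b : U, ∃ t : U, ((t, b) : U × U) ∈ N := by
    intro b
    have hb : ((0, b) : U × U) ∈ N ⊔ F := by rw [h1]; trivial
    rcases Submodule.mem_sup.mp hb with ⟨n, hn, z, hz, hsum⟩
    have hz2 : z.2 = 0 := mem_fst_iff.mp hz
    refine ⟨n.1, ?_⟩
    have hn2 : n.2 = b := by
      have := congrArg Prod.snd hsum
      simpa [hz2] using this
    have : ((n.1, b) : U × U) = n := by
      ext <;> simp [hn2]
    rw [this]; exact hn
  -- B := N.comap inr is proper, A := N.comap inl is proper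
  have hBne : N.comap (LinearMap.inr R U U) ≠ ⊤ := by
    intro hBtop
    apply hN
    have hSle : ∀ b : U, ((0, b) : U × U) ∈ N := by
      intro b
      have : b ∈ N.comap (LinearMap.inr R U U) := by rw [hBtop]; trivial
      exact Submodule.mem_comap.mp this
    rw [eq_top_iff]
    rintro ⟨a, b⟩ -
    obtain ⟨t, ht⟩ := hPfull a
    have : ((a, b) : U × U) = (a, t) + (0, b - t) := by ext <;> simp
    rw [this]; exact N.add_mem ht (hSle _)
  have hAne : N.comap (LinearMap.inl R U U) ≠ ⊤ := by
    intro hAtop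
    apply hN
    have hFle : ∀ a : U, ((a, 0) : U × U) ∈ N := by
      intro a
      have : a ∈ N.comap (LinearMap.inl R U U) := by rw [hAtop]; trivial
      exact Submodule.mem_comap.mp this
    rw [eq_top_iff]
    rintro ⟨a, b⟩ -
    obtain ⟨t, ht⟩ := hQfull b
    have : ((a, b) : U × U) = (t, b) + (a - t, 0) := by ext <;> simp
    rw [this]; exact N.add_mem ht (hFle _)
  -- smallness of N ⊓ S and N ⊓ F
  have hNS_small : IsSmallSubmodule (N ⊓ S) := by
    have hEq : N ⊓ S = (⊥ : Submodule R U).prod (N.comap (LinearMap.inr R U U)) := by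
      ext ⟨a, b⟩
      simp only [Submodule.mem_inf, Submodule.mem_prod, Submodule.mem_bot, Submodule.mem_comap]
      constructor
      · rintro ⟨hn, hs⟩
        have ha : a = 0 := mem_snd_iff.mp hs
        subst ha
        exact ⟨rfl, hn⟩
      · rintro ⟨ha, hb⟩
        subst ha
        exact ⟨hb, mem_snd_iff.mpr rfl⟩
    rw [hEq]
    exact small_prod_right hH hBne
  have hNF_small : IsSmallSubmodule (N ⊓ F) := by
    have hEq : N ⊓ F = (N.comap (LinearMap.inl R U U)).prod (⊥ : Submodule R U) := by
      ext ⟨a, b⟩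
      simp only [Submodule.mem_inf, Submodule.mem_prod, Submodule.mem_bot, Submodule.mem_comap]
      constructor
      · rintro ⟨hn, hs⟩
        have hb : b = 0 := mem_fst_iff.mp hs
        subst hb
        exact ⟨hn, rfl⟩
      · rintro ⟨ha, hb⟩
        subst hb
        exact ⟨ha, mem_fst_iff.mpr rfl⟩
    rw [hEq]
    exact small_prod_left hH hAne
  -- the common tail
  have tail : ∀ X C : Submodule R (U × U), X ≤ N → IsCompl X C → IsSmallSubmodule (N ⊓ C) →
      ∃ X' : Submodule R (U × U), X' ≤ N ∧ IsDirectSummand X' ∧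
        IsSmallSubmodule (N.map X'.mkQ) := by
    intro X C hXN hc hsmall
    refine ⟨X, hXN, ⟨C, hc⟩, ?_⟩
    apply isSmall_quot hXN
    intro Y hXY hYtop hNYtop
    have hNdec : N = X ⊔ (N ⊓ C) := by
      apply le_antisymm
      · intro n hn
        have hn' : n ∈ X ⊔ C := by rw [hc.sup_eq_top]; trivial
        rcases Submodule.mem_sup.mp hn' with ⟨x, hx, c, hcm, hsum⟩
        have hcN : c ∈ N := by
          have hce : c = n - x := by rw [← hsum]; abel
          rw [hce]; exact N.sub_mem hn (hXN hx)
        exact Submodule.mem_sup.mpr ⟨x, hx, c, ⟨hcN, hcm⟩, hsum⟩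
      · exact sup_le hXN inf_le_left
    have hfinal : (N ⊓ C) ⊔ Y = ⊤ := by
      have hstep : X ⊔ ((N ⊓ C) ⊔ Y) = (N ⊓ C) ⊔ Y :=
        sup_eq_right.mpr (le_sup_of_le_right hXY)
      calc (N ⊓ C) ⊔ Y = X ⊔ ((N ⊓ C) ⊔ Y) := hstep.symm
        _ = (X ⊔ (N ⊓ C)) ⊔ Y := by rw [sup_assoc]
        _ = N ⊔ Y := by rw [← hNdec]
        _ = ⊤ := hNYtop
    exact hsmall Y hYtop hfinal
  -- the maps into M/N
  set f : ↥F →ₗ[R] ((U × U) ⧸ N) := N.mkQ ∘ₗ F.subtype with hfdef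
  set g : ↥S →ₗ[R] ((U × U) ⧸ N) := N.mkQ ∘ₗ S.subtype with hgdef
  have gsurj : Function.Surjective g := by
    intro q
    obtain ⟨m, rfl⟩ := N.mkQ_surjective q
    have hm : m ∈ N ⊔ S := by rw [h2]; trivial
    rcases Submodule.mem_sup.mp hm with ⟨n, hn, s, hs, hsum⟩
    refine ⟨⟨s, hs⟩, ?_⟩
    show N.mkQ (S.subtype ⟨s, hs⟩) = N.mkQ m
    have : S.subtype ⟨s, hs⟩ = s := rfl
    rw [this, Submodule.mkQ_apply, Submodule.mkQ_apply, Submodule.Quotient.eq]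
    have hsm : s - m = -n := by rw [← hsum]; abel
    rw [hsm]; exact N.neg_mem hn
  have fsurj : Function.Surjective f := by
    intro q
    obtain ⟨m, rfl⟩ := N.mkQ_surjective q
    have hm : m ∈ N ⊔ F := by rw [h1]; trivial
    rcases Submodule.mem_sup.mp hm with ⟨n, hn, s, hs, hsum⟩
    refine ⟨⟨s, hs⟩, ?_⟩
    show N.mkQ (F.subtype ⟨s, hs⟩) = N.mkQ m
    have : F.subtype ⟨s, hs⟩ = s := rfl
    rw [this, Submodule.mkQ_apply, Submodule.mkQ_apply, Submodule.Quotient.eq]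
    have hsm : s - m = -n := by rw [← hsum]; abel
    rw [hsm]; exact N.neg_mem hn
  rcases hyp ((U × U) ⧸ N) f g gsurj with ⟨h, hcomm⟩ | ⟨N₀, h, hsurj, hcomm⟩
  · -- case (i): graph of h complements S
    set X : Submodule R (U × U) := LinearMap.range (F.subtype - S.subtype ∘ₗ h) with hXdef
    have happ : ∀ u : ↥F, (F.subtype - S.subtype ∘ₗ h) u = (u : U × U) - ((h u : ↥S) : U × U) :=
      fun u => rfl
    have hXN : X ≤ N := by
      rintro x ⟨u, rfl⟩
      rw [happ]
      have hfu : f u = g (h u) := by rw [hcomm]; rfl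
      have : N.mkQ ((u : U × U) - ((h u : ↥S) : U × U)) = 0 := by
        rw [map_sub]
        have e1 : N.mkQ (u : U × U) = f u := rfl
        have e2 : N.mkQ ((h u : ↥S) : U × U) = g (h u) := rfl
        rw [e1, e2, hfu, sub_self]
      rwa [Submodule.mkQ_apply, Submodule.Quotient.mk_eq_zero] at this
    have hcompl : IsCompl X S := by
      constructor
      · rw [Submodule.disjoint_def]
        rintro x ⟨u, rfl⟩ hxS
        rw [happ] at hxS ⊢
        have hs1 : ((h u : ↥S) : U × U).1 = 0 := mem_snd_iff.mp (h u).2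
        have hx1 : ((u : U × U) - ((h u : ↥S) : U × U)).1 = 0 := mem_snd_iff.mp hxS
        have hu1 : (u : U × U).1 = 0 := by
          have : (u : U × U).1 - ((h u : ↥S) : U × U).1 = 0 := hx1
          rwa [hs1, sub_zero] at this
        have hu2 : (u : U × U).2 = 0 := mem_fst_iff.mp u.2
        have hu0 : u = 0 := by
          apply Subtype.ext
          ext
          · exact hu1
          · exact hu2
        rw [hu0]
        simp
      · rw [codisjoint_iff, eq_top_iff]
        rintro ⟨a, b⟩ -
        set u : ↥F := ⟨(a, 0), mem_fst_iff.mpr rfl⟩ with hudef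
        refine Submodule.mem_sup.mpr ⟨(u : U × U) - ((h u : ↥S) : U × U), ⟨u, rfl⟩,
          ((a, b) : U × U) - ((u : U × U) - ((h u : ↥S) : U × U)), ?_, by abel⟩
        apply mem_snd_iff.mpr
        have hs1 : ((h u : ↥S) : U × U).1 = 0 := mem_snd_iff.mp (h u).2
        show ((a, b) : U × U).1 - ((u : U × U).1 - ((h u : ↥S) : U × U).1) = 0
        rw [hs1]
        show a - (a - 0) = 0
        simp
    exact tail X S hXN hcompl hNS_small
  · -- case (ii)
    have hN₀top : N₀ = ⊤ := by
      have hsup : N ⊔ N₀.map S.subtype = ⊤ := by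
        rw [eq_top_iff]
        rintro m -
        obtain ⟨u, hu⟩ := fsurj (N.mkQ m)
        obtain ⟨n₀, hn₀⟩ := hsurj u
        have hgm : N.mkQ (S.subtype (N₀.subtype n₀)) = N.mkQ m := by
          have e1 : g (N₀.subtype n₀) = f (h n₀) := by
            have := congrArg (fun φ => φ n₀) hcomm
            simpa using this
          have e2 : N.mkQ (S.subtype (N₀.subtype n₀)) = g (N₀.subtype n₀) := rfl
          rw [e2, e1, hn₀, hu]
        have hmem : m - S.subtype (N₀.subtype n₀) ∈ N := by
          have : N.mkQ (m - S.subtype (N₀.subtype n₀)) = 0 := by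
            rw [map_sub, hgm, sub_self]
          rwa [Submodule.mkQ_apply, Submodule.Quotient.mk_eq_zero] at this
        refine Submodule.mem_sup.mpr ⟨m - S.subtype (N₀.subtype n₀), hmem,
          S.subtype (N₀.subtype n₀), ?_, by abel⟩
        exact ⟨N₀.subtype n₀, n₀.2, rfl⟩
      have hSdec : ∀ s : U × U, s ∈ S → s ∈ N₀.map S.subtype ⊔ (N ⊓ S) := by
        intro s hs
        have : s ∈ N ⊔ N₀.map S.subtype := by rw [hsup]; trivial
        rcases Submodule.mem_sup.mp this with ⟨n, hn, w, hw, hsum⟩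
        have hwS : w ∈ S := by
          rcases hw with ⟨w', _, rfl⟩
          exact w'.2
        have hnS : n ∈ S := by
          have : n = s - w := by rw [← hsum]; abel
          rw [this]; exact S.sub_mem hs hwS
        exact Submodule.mem_sup.mpr ⟨w, hw, n, ⟨hn, hnS⟩, by rw [← hsum]; abel⟩
      have hUdec : N₀.map ((LinearMap.snd R U U) ∘ₗ S.subtype) ⊔
          N.comap (LinearMap.inr R U U) = ⊤ := by
        rw [eq_top_iff]
        rintro b -
        have hb : ((0, b) : U × U) ∈ N₀.map S.subtype ⊔ (N ⊓ S) :=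
          hSdec _ (mem_snd_iff.mpr rfl)
        rcases Submodule.mem_sup.mp hb with ⟨w, hw, n, hn, hsum⟩
        refine Submodule.mem_sup.mpr ⟨w.2, ?_, n.2, ?_, ?_⟩
        · rcases hw with ⟨w', hw', rfl⟩
          exact ⟨w', hw', rfl⟩
        · have hn1 : n.1 = 0 := mem_snd_iff.mp hn.2
          have : ((0, n.2) : U × U) = n := by ext <;> simp [hn1]
          apply Submodule.mem_comap.mpr
          show ((0, n.2) : U × U) ∈ N
          rw [this]; exact hn.1
        · have := congrArg Prod.snd hsum
          simpa using this
      by_cases hN₀u : N₀.map ((LinearMap.snd R U U) ∘ₗ S.subtype) = ⊤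
      · rw [eq_top_iff]
        rintro s -
        have : (s : U × U).2 ∈ N₀.map ((LinearMap.snd R U U) ∘ₗ S.subtype) := by
          rw [hN₀u]; trivial
        rcases this with ⟨w', hw', hww⟩
        have : w' = s := by
          apply Subtype.ext
          have h1' : ((w' : U × U)).1 = 0 := mem_snd_iff.mp w'.2
          have h1s : ((s : U × U)).1 = 0 := mem_snd_iff.mp s.2
          ext
          · rw [h1', h1s]
          · exact hww
        rw [← this]; exact hw'
      · exfalso
        apply hBne
        by_contra hB
        exact hH.2 _ hN₀u _ hB hUdec
    -- define the total map H : S → F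
    set e0 := LinearEquiv.ofTop N₀ hN₀top with he0
    set H : ↥S →ₗ[R] ↥F := h ∘ₗ (e0.symm : ↥S →ₗ[R] ↥N₀) with hHdef
    have hHcomm : ∀ s : ↥S, g s = f (H s) := by
      intro s
      have hsub : N₀.subtype (e0.symm s) = s := by
        apply Subtype.ext
        rfl
      have := congrArg (fun φ => φ (e0.symm s)) hcomm
      simp only [LinearMap.comp_apply] at this
      rw [hsub] at this
      exact this
    set X : Submodule R (U × U) := LinearMap.range (S.subtype - F.subtype ∘ₗ H) with hXdef
    have happ : ∀ s : ↥S, (S.subtype - F.subtype ∘ₗ H) s = (s : U × U) - ((H s : ↥F) : U × U) :=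
      fun s => rfl
    have hXN : X ≤ N := by
      rintro x ⟨s, rfl⟩
      rw [happ]
      have : N.mkQ ((s : U × U) - ((H s : ↥F) : U × U)) = 0 := by
        rw [map_sub]
        have e1 : N.mkQ (s : U × U) = g s := rfl
        have e2 : N.mkQ ((H s : ↥F) : U × U) = f (H s) := rfl
        rw [e1, e2, hHcomm, sub_self]
      rwa [Submodule.mkQ_apply, Submodule.Quotient.mk_eq_zero] at this
    have hcompl : IsCompl X F := by
      constructor
      · rw [Submodule.disjoint_def]
        rintro x ⟨s, rfl⟩ hxF
        rw [happ] at hxF ⊢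
        have hf2 : ((H s : ↥F) : U × U).2 = 0 := mem_fst_iff.mp (H s).2
        have hx2 : ((s : U × U) - ((H s : ↥F) : U × U)).2 = 0 := mem_fst_iff.mp hxF
        have hs2 : (s : U × U).2 = 0 := by
          have : (s : U × U).2 - ((H s : ↥F) : U × U).2 = 0 := hx2
          rwa [hf2, sub_zero] at this
        have hs1 : (s : U × U).1 = 0 := mem_snd_iff.mp s.2
        have hs0 : s = 0 := by
          apply Subtype.ext
          ext
          · exact hs1
          · exact hs2
        rw [hs0]
        simp
      · rw [codisjoint_iff, eq_top_iff]
        rintro ⟨a, b⟩ -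
        set s : ↥S := ⟨(0, b), mem_snd_iff.mpr rfl⟩ with hsdef
        refine Submodule.mem_sup.mpr ⟨(s : U × U) - ((H s : ↥F) : U × U), ⟨s, rfl⟩,
          ((a, b) : U × U) - ((s : U × U) - ((H s : ↥F) : U × U)), ?_, by abel⟩
        apply mem_fst_iff.mpr
        have hf2 : ((H s : ↥F) : U × U).2 = 0 := mem_fst_iff.mp (H s).2
        show ((a, b) : U × U).2 - ((s : U × U).2 - ((H s : ↥F) : U × U).2) = 0
        rw [hf2]
        show b - (b - 0) = 0
        simp
    exact tail X F hXN hcompl hNF_small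


private lemma sup_snd_iff {N : Submodule R (U × U)} :
    N ⊔ Submodule.snd R U U = ⊤ ↔ ∀ a : U, ∃ t : U, ((a, t) : U × U) ∈ N := by
  constructor
  · intro h a
    have ha : ((a, 0) : U × U) ∈ N ⊔ Submodule.snd R U U := by rw [h]; trivial
    rcases Submodule.mem_sup.mp ha with ⟨n, hn, z, hz, hsum⟩
    have hz1 : z.1 = 0 := mem_snd_iff.mp hz
    refine ⟨n.2, ?_⟩
    have hn1 : n.1 = a := by
      have := congrArg Prod.fst hsum
      simpa [hz1] using this
    have : ((a, n.2) : U × U) = n := by ext <;> simp [hn1]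
    rw [this]; exact hn
  · intro H
    rw [eq_top_iff]
    rintro ⟨a, b⟩ -
    obtain ⟨t, ht⟩ := H a
    refine Submodule.mem_sup.mpr ⟨(a, t), ht, (0, b - t), mem_snd_iff.mpr rfl, ?_⟩
    ext <;> simp

private lemma sup_fst_iff {N : Submodule R (U × U)} :
    N ⊔ Submodule.fst R U U = ⊤ ↔ ∀ b : U, ∃ t : U, ((t, b) : U × U) ∈ N := by
  constructor
  · intro h b
    have hb : ((0, b) : U × U) ∈ N ⊔ Submodule.fst R U U := by rw [h]; trivial
    rcases Submodule.mem_sup.mp hb with ⟨n, hn, z, hz, hsum⟩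
    have hz2 : z.2 = 0 := mem_fst_iff.mp hz
    refine ⟨n.1, ?_⟩
    have hn2 : n.2 = b := by
      have := congrArg Prod.snd hsum
      simpa [hz2] using this
    have : ((n.1, b) : U × U) = n := by ext <;> simp [hn2]
    rw [this]; exact hn
  · intro H
    rw [eq_top_iff]
    rintro ⟨a, b⟩ -
    obtain ⟨t, ht⟩ := H b
    refine Submodule.mem_sup.mpr ⟨(t, b), ht, (a - t, 0), mem_fst_iff.mpr rfl, ?_⟩
    ext <;> simp


end LiftingAux3

/-- Let `U` be hollow and uniform, `M = U²`, `U₁ = U × 0`, `U₂ = 0 × U`. Suppose that for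
any module `X`, any homomorphism `f : U₁ → X` and any surjective homomorphism `g : U₂ → X`,
either (i) there is `h : U₁ → U₂` with `f = g ∘ h`, or (ii) there are a submodule `N` of
`U₂` and a surjective homomorphism `h : N → U₁` with `g|_N = f ∘ h`. Then `M` is lifting. -/
theorem stmt_4 {R : Type*} {U : Type u} [Ring R] [AddCommGroup U] [Module R U]
    (hH : IsHollowModule R U) (hU : IsUniformModule R U)
    (hyp : ∀ (X : Type u) [AddCommGroup X] [Module R X]
      (f : ↥(Submodule.fst R U U) →ₗ[R] X) (g : ↥(Submodule.snd R U U) →ₗ[R] X),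
      Function.Surjective g →
        (∃ h : ↥(Submodule.fst R U U) →ₗ[R] ↥(Submodule.snd R U U), f = g ∘ₗ h) ∨
        (∃ (N : Submodule R ↥(Submodule.snd R U U))
            (h : ↥N →ₗ[R] ↥(Submodule.fst R U U)),
          Function.Surjective h ∧ g ∘ₗ N.subtype = f ∘ₗ h)) :
    IsLiftingModule R (U × U) := by
  classical
  intro N
  by_cases hNtop : N = ⊤
  · refine ⟨⊤, le_of_eq hNtop.symm, ⟨⊥, isCompl_top_bot⟩, ?_⟩
    intro Y hY _
    apply hY
    have hz : ∀ z : (U × U) ⧸ (⊤ : Submodule R (U × U)), z = 0 := by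
      intro z
      obtain ⟨m, rfl⟩ := (⊤ : Submodule R (U × U)).mkQ_surjective z
      rw [Submodule.mkQ_apply, Submodule.Quotient.mk_eq_zero]
      trivial
    rw [eq_top_iff]
    rintro z -
    rw [hz z]
    exact Y.zero_mem
  by_cases hP : N ⊔ Submodule.snd R U U = ⊤ <;>
    by_cases hQ : N ⊔ Submodule.fst R U U = ⊤
  · -- clean case
    exact clean_case hH hyp N hNtop hQ hP
  · -- hP, ¬hQ : use e₁ : (a,b) ↦ (a, a+b)
    have hQ' : N.map (LinearMap.snd R U U) ≠ ⊤ := by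
      intro htop
      apply hQ
      apply sup_fst_iff.mpr
      intro b
      have : b ∈ N.map (LinearMap.snd R U U) := by rw [htop]; trivial
      rcases this with ⟨n, hn, hb⟩
      refine ⟨n.1, ?_⟩
      have : ((n.1, b) : U × U) = n := by
        ext
        · rfl
        · exact hb.symm
      rw [this]; exact hn
    have hdd : N.map (LinearMap.snd R U U - LinearMap.fst R U U) = ⊤ := by
      by_contra hne
      have hsup : N.map (LinearMap.snd R U U) ⊔
          N.map (LinearMap.snd R U U - LinearMap.fst R U U) = ⊤ := by
        rw [eq_top_iff]
        rintro u -
        obtain ⟨t, ht⟩ := sup_snd_iff.mp hP u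
        have hmem : t - u ∈ N.map (LinearMap.snd R U U - LinearMap.fst R U U) :=
          ⟨(u, t), ht, by simp⟩
        have hmem2 : u - t ∈ N.map (LinearMap.snd R U U - LinearMap.fst R U U) := by
          have := Submodule.neg_mem _ hmem
          rwa [neg_sub] at this
        exact Submodule.mem_sup.mpr ⟨t, ⟨(u, t), ht, rfl⟩, u - t, hmem2, by abel⟩
      exact hH.2 _ hQ' _ hne hsup
    set A1 : (U × U) →ₗ[R] (U × U) :=
      (LinearMap.fst R U U).prod (LinearMap.fst R U U + LinearMap.snd R U U) with hA1
    set A2 : (U × U) →ₗ[R] (U × U) :=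
      (LinearMap.fst R U U).prod (LinearMap.snd R U U - LinearMap.fst R U U) with hA2
    have hc1 : A1.comp A2 = LinearMap.id := by
      apply LinearMap.ext
      rintro ⟨a, b⟩
      show ((a, a + (b - a)) : U × U) = (a, b)
      ext
      · rfl
      · show a + (b - a) = b
        abel
    have hc2 : A2.comp A1 = LinearMap.id := by
      apply LinearMap.ext
      rintro ⟨a, b⟩
      show ((a, (a + b) - a) : U × U) = (a, b)
      ext
      · rfl
      · show (a + b) - a = b
        abel
    set e₁ : (U × U) ≃ₗ[R] (U × U) := LinearEquiv.ofLinear A1 A2 hc1 hc2 with he₁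
    have he₁app : ∀ x : U × U, e₁ x = (x.1, x.1 + x.2) := fun x => rfl
    have he₁symm : ∀ x : U × U, e₁.symm x = (x.1, x.2 - x.1) := fun x => rfl
    apply transport e₁
    have hN' : N.comap (e₁ : (U × U) →ₗ[R] (U × U)) ≠ ⊤ := by
      intro hc
      apply hNtop
      rw [eq_top_iff]
      rintro m -
      have : e₁.symm m ∈ N.comap (e₁ : (U × U) →ₗ[R] (U × U)) := by rw [hc]; trivial
      have h2 : e₁ (e₁.symm m) ∈ N := this
      rwa [e₁.apply_symm_apply] at h2
    have h2' : N.comap (e₁ : (U × U) →ₗ[R] (U × U)) ⊔ Submodule.snd R U U = ⊤ := by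
      apply sup_snd_iff.mpr
      intro a
      obtain ⟨t, ht⟩ := sup_snd_iff.mp hP a
      refine ⟨t - a, ?_⟩
      show e₁ ((a, t - a) : U × U) ∈ N
      rw [he₁app]
      show ((a, a + (t - a)) : U × U) ∈ N
      have : a + (t - a) = t := by abel
      rw [this]; exact ht
    have h1' : N.comap (e₁ : (U × U) →ₗ[R] (U × U)) ⊔ Submodule.fst R U U = ⊤ := by
      apply sup_fst_iff.mpr
      intro b
      have : b ∈ N.map (LinearMap.snd R U U - LinearMap.fst R U U) := by rw [hdd]; trivial
      rcases this with ⟨n, hn, hb⟩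
      -- hb : n.2 - n.1 = b
      refine ⟨n.1, ?_⟩
      show e₁ ((n.1, b) : U × U) ∈ N
      rw [he₁app]
      show ((n.1, n.1 + b) : U × U) ∈ N
      have hb' : n.2 - n.1 = b := hb
      have : n.1 + b = n.2 := by rw [← hb']; abel
      rw [this]
      have : ((n.1, n.2) : U × U) = n := rfl
      rw [this]; exact hn
    exact clean_case hH hyp _ hN' h1' h2'
  · -- ¬hP, hQ : use e₂ : (a,b) ↦ (a+b, b)
    have hP' : N.map (LinearMap.fst R U U) ≠ ⊤ := by
      intro htop
      apply hP
      apply sup_snd_iff.mpr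
      intro a
      have : a ∈ N.map (LinearMap.fst R U U) := by rw [htop]; trivial
      rcases this with ⟨n, hn, ha⟩
      refine ⟨n.2, ?_⟩
      have : ((a, n.2) : U × U) = n := by
        ext
        · exact ha.symm
        · rfl
      rw [this]; exact hn
    have hdd : N.map (LinearMap.fst R U U - LinearMap.snd R U U) = ⊤ := by
      by_contra hne
      have hsup : N.map (LinearMap.fst R U U) ⊔
          N.map (LinearMap.fst R U U - LinearMap.snd R U U) = ⊤ := by
        rw [eq_top_iff]
        rintro u -
        obtain ⟨t, ht⟩ := sup_fst_iff.mp hQ u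
        have hmem : t - u ∈ N.map (LinearMap.fst R U U - LinearMap.snd R U U) :=
          ⟨(t, u), ht, by simp⟩
        have hmem2 : u - t ∈ N.map (LinearMap.fst R U U - LinearMap.snd R U U) := by
          have := Submodule.neg_mem _ hmem
          rwa [neg_sub] at this
        exact Submodule.mem_sup.mpr ⟨t, ⟨(t, u), ht, rfl⟩, u - t, hmem2, by abel⟩
      exact hH.2 _ hP' _ hne hsup
    set A1 : (U × U) →ₗ[R] (U × U) :=
      (LinearMap.fst R U U + LinearMap.snd R U U).prod (LinearMap.snd R U U) with hA1
    set A2 : (U × U) →ₗ[R] (U × U) :=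
      (LinearMap.fst R U U - LinearMap.snd R U U).prod (LinearMap.snd R U U) with hA2
    have hc1 : A1.comp A2 = LinearMap.id := by
      apply LinearMap.ext
      rintro ⟨a, b⟩
      show (((a - b) + b, b) : U × U) = (a, b)
      ext
      · show (a - b) + b = a
        abel
      · rfl
    have hc2 : A2.comp A1 = LinearMap.id := by
      apply LinearMap.ext
      rintro ⟨a, b⟩
      show (((a + b) - b, b) : U × U) = (a, b)
      ext
      · show (a + b) - b = a
        abel
      · rfl
    set e₂ : (U × U) ≃ₗ[R] (U × U) := LinearEquiv.ofLinear A1 A2 hc1 hc2 with he₂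
    have he₂app : ∀ x : U × U, e₂ x = (x.1 + x.2, x.2) := fun x => rfl
    apply transport e₂
    have hN' : N.comap (e₂ : (U × U) →ₗ[R] (U × U)) ≠ ⊤ := by
      intro hc
      apply hNtop
      rw [eq_top_iff]
      rintro m -
      have : e₂.symm m ∈ N.comap (e₂ : (U × U) →ₗ[R] (U × U)) := by rw [hc]; trivial
      have h2 : e₂ (e₂.symm m) ∈ N := this
      rwa [e₂.apply_symm_apply] at h2
    have h1' : N.comap (e₂ : (U × U) →ₗ[R] (U × U)) ⊔ Submodule.fst R U U = ⊤ := by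
      apply sup_fst_iff.mpr
      intro b
      obtain ⟨t, ht⟩ := sup_fst_iff.mp hQ b
      refine ⟨t - b, ?_⟩
      show e₂ ((t - b, b) : U × U) ∈ N
      rw [he₂app]
      show (((t - b) + b, b) : U × U) ∈ N
      have : (t - b) + b = t := by abel
      rw [this]; exact ht
    have h2' : N.comap (e₂ : (U × U) →ₗ[R] (U × U)) ⊔ Submodule.snd R U U = ⊤ := by
      apply sup_snd_iff.mpr
      intro a
      have : a ∈ N.map (LinearMap.fst R U U - LinearMap.snd R U U) := by rw [hdd]; trivial
      rcases this with ⟨n, hn, ha⟩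
      refine ⟨n.2, ?_⟩
      show e₂ ((a, n.2) : U × U) ∈ N
      rw [he₂app]
      show ((a + n.2, n.2) : U × U) ∈ N
      have ha' : n.1 - n.2 = a := ha
      have : a + n.2 = n.1 := by rw [← ha']; abel
      rw [this]
      have : ((n.1, n.2) : U × U) = n := rfl
      rw [this]; exact hn
    exact clean_case hH hyp _ hN' h1' h2'
  · -- ¬hP, ¬hQ : N is small
    refine ⟨⊥, bot_le, ⟨⊤, isCompl_bot_top⟩, ?_⟩
    apply isSmall_quot bot_le
    intro Y _ hYtop hNYtop
    have hP' : N.map (LinearMap.fst R U U) ≠ ⊤ := by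
      intro htop
      apply hP
      apply sup_snd_iff.mpr
      intro a
      have : a ∈ N.map (LinearMap.fst R U U) := by rw [htop]; trivial
      rcases this with ⟨n, hn, ha⟩
      refine ⟨n.2, ?_⟩
      have : ((a, n.2) : U × U) = n := by
        ext
        · exact ha.symm
        · rfl
      rw [this]; exact hn
    have hQ' : N.map (LinearMap.snd R U U) ≠ ⊤ := by
      intro htop
      apply hQ
      apply sup_fst_iff.mpr
      intro b
      have : b ∈ N.map (LinearMap.snd R U U) := by rw [htop]; trivial
      rcases this with ⟨n, hn, hb⟩
      refine ⟨n.1, ?_⟩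
      have : ((n.1, b) : U × U) = n := by
        ext
        · rfl
        · exact hb.symm
      rw [this]; exact hn
    have hNle : N ≤ (N.map (LinearMap.fst R U U)).prod (⊥ : Submodule R U) ⊔
        ((⊥ : Submodule R U).prod (N.map (LinearMap.snd R U U)) ⊔ Y) := by
      intro n hn
      have hdec : n = ((n.1, 0) : U × U) + (0, n.2) := by ext <;> simp
      rw [hdec]
      apply Submodule.add_mem
      · exact Submodule.mem_sup_left (Submodule.mem_prod.mpr ⟨⟨n, hn, rfl⟩, rfl⟩)
      · exact Submodule.mem_sup_right (Submodule.mem_sup_left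
          (Submodule.mem_prod.mpr ⟨rfl, ⟨n, hn, rfl⟩⟩))
    have hbig : (N.map (LinearMap.fst R U U)).prod (⊥ : Submodule R U) ⊔
        ((⊥ : Submodule R U).prod (N.map (LinearMap.snd R U U)) ⊔ Y) = ⊤ := by
      rw [eq_top_iff, ← hNYtop]
      exact sup_le hNle (le_sup_of_le_right le_sup_right)
    by_cases hmid : (⊥ : Submodule R U).prod (N.map (LinearMap.snd R U U)) ⊔ Y = ⊤
    · exact small_prod_right hH hQ' Y hYtop hmid
    · exact small_prod_left hH hP' _ hmid hbig
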